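/- Let A be a commutative ring, n ≥ 1 an integer, F, a ∈ A, and ζ ∈ A an element with ζ^n = 1 and ζ invertible. Let B := A[u, v]/(uv − F, u^n + v^n − 2a). Then there exist (unique) A-algebra automorphisms σ and τ of B with σ(u) = ζ·u, σ(v) = ζ⁻¹·v, τ(u) = v, τ(v) = u, and they satisfy the dihedral relations σ^n = id, τ² = id, and (σ ∘ τ)² = id; in particular σ and τ generate an action of the dihedral group D_n on B by A-algebra automorphisms. -/

import Mathlib

noncomputable section

/-- The ideal `(uv − F, uⁿ + vⁿ − 2a)` in `A[u, v]`. -/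
def dihedralIdeal (A : Type) [CommRing A] (n : ℕ) (F a : A) :
    Ideal (MvPolynomial (Fin 2) A) :=
  Ideal.span {MvPolynomial.X 0 * MvPolynomial.X 1 - MvPolynomial.C F,
    MvPolynomial.X 0 ^ n + MvPolynomial.X 1 ^ n - MvPolynomial.C (2 * a)}

/-- The ring `B = A[u, v]/(uv − F, uⁿ + vⁿ − 2a)`, the coordinate ring of the simple
dihedral cover of `Spec A` determined by the data `F` and `a`. -/
abbrev DihedralCoverRing (A : Type) [CommRing A] (n : ℕ) (F a : A) : Type :=
  MvPolynomial (Fin 2) A ⧸ dihedralIdeal A n F a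

/-- The image `u` of the first variable in `B`. -/
def uElt (A : Type) [CommRing A] (n : ℕ) (F a : A) : DihedralCoverRing A n F a :=
  Ideal.Quotient.mk _ (MvPolynomial.X 0)

/-- The image `v` of the second variable in `B`. -/
def vElt (A : Type) [CommRing A] (n : ℕ) (F a : A) : DihedralCoverRing A n F a :=
  Ideal.Quotient.mk _ (MvPolynomial.X 1)

/-!
STATEMENT 8: Let `A` be a commutative ring, `n ≥ 1` an integer, `F, a ∈ A`, and `ζ ∈ A`
an invertible element with `ζⁿ = 1`.  Let `B := A[u, v]/(uv − F, uⁿ + vⁿ − 2a)`.  Then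
there exist (unique) `A`-algebra automorphisms `σ` and `τ` of `B` with `σ(u) = ζ·u`,
`σ(v) = ζ⁻¹·v`, `τ(u) = v`, `τ(v) = u`, and they satisfy the dihedral relations `σⁿ = id`,
`τ² = id` and `(σ∘τ)² = id`; in particular `σ` and `τ` generate an action of the dihedral
group `Dₙ` on `B` by `A`-algebra automorphisms.
-/


/-- Lift to the dihedral group from generators satisfying the dihedral relations. -/
theorem dihedral_lift {G : Type*} [Group G] (n : ℕ) [NeZero n] (s t : G)
    (hs : s ^ n = 1) (ht : t ^ 2 = 1) (hst : (s * t) ^ 2 = 1) :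
    ∃ ρ : DihedralGroup n →* G, ρ (DihedralGroup.r 1) = s ∧ ρ (DihedralGroup.sr 0) = t := by
  have hsz : s ^ (n : ℤ) = 1 := by rw [zpow_natCast, hs]
  have htt : t * t = 1 := by rw [← sq, ht]
  -- congruence of zpow
  have zc : ∀ (x : ZMod n) (m : ℤ), ((x : ZMod n) = (m : ZMod n)) →
      s ^ (x.val : ℤ) = s ^ m := by
    intro x m hx
    have hdvd : (n : ℤ) ∣ (x.val : ℤ) - m := by
      rw [← ZMod.intCast_zmod_eq_zero_iff_dvd]
      push_cast
      simp [ZMod.natCast_val, ZMod.cast_id, hx]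
    obtain ⟨k, hk⟩ := hdvd
    have : (x.val : ℤ) = m + n * k := by linarith
    rw [this, zpow_add, zpow_mul, hsz, one_zpow, mul_one]
  -- key conjugation relation
  have hconj : t * s * t⁻¹ = s⁻¹ := by
    have h1 : s * t * s * t = 1 := by
      have := hst; rwa [sq, show s*t*(s*t)=s*t*s*t by group] at this
    have ht' : t⁻¹ = t := by
      rw [inv_eq_iff_mul_eq_one, htt]
    rw [ht']
    have : t * s * t = s⁻¹ * (s * t * s * t) := by group
    rw [this, h1, mul_one]
  have key : ∀ m : ℤ, s ^ m * t = t * s ^ (-m) := by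
    intro m
    have : (MulAut.conj t) (s ^ (-m)) = s ^ m := by
      rw [map_zpow, MulAut.conj_apply, hconj, inv_zpow, ← zpow_neg, neg_neg]
    rw [MulAut.conj_apply] at this
    have ht' : t⁻¹ = t := by rw [inv_eq_iff_mul_eq_one, htt]
    rw [ht'] at this
    calc s ^ m * t = t * s ^ (-m) * t * t := by rw [this]
    _ = t * s ^ (-m) * (t * t) := by group
    _ = t * s ^ (-m) := by rw [htt, mul_one]
  let f : DihedralGroup n → G := fun g =>
    match g with
    | .r i => s ^ (i.val : ℤ)
    | .sr i => t * s ^ (i.val : ℤ)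
  have hmul : ∀ g h : DihedralGroup n, f (g * h) = f g * f h := by
    rintro (i | i) (j | j)
    · show s ^ (((i + j : ZMod n)).val : ℤ) = s ^ (i.val : ℤ) * s ^ (j.val : ℤ)
      rw [← zpow_add, zc (i + j) ((i.val : ℤ) + j.val) (by push_cast; simp [ZMod.natCast_val, ZMod.cast_id])]
    · show t * s ^ (((j - i : ZMod n)).val : ℤ) = s ^ (i.val : ℤ) * (t * s ^ (j.val : ℤ))
      rw [zc (j - i) ((j.val : ℤ) - i.val) (by push_cast; simp [ZMod.natCast_val, ZMod.cast_id]),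
        ← mul_assoc, key, mul_assoc, ← zpow_add]
      ring_nf
    · show t * s ^ (((i + j : ZMod n)).val : ℤ) = t * s ^ (i.val : ℤ) * s ^ (j.val : ℤ)
      rw [zc (i + j) ((i.val : ℤ) + j.val) (by push_cast; simp [ZMod.natCast_val, ZMod.cast_id]),
        mul_assoc, ← zpow_add]
    · show s ^ (((j - i : ZMod n)).val : ℤ) = t * s ^ (i.val : ℤ) * (t * s ^ (j.val : ℤ))
      rw [zc (j - i) ((j.val : ℤ) - i.val) (by push_cast; simp [ZMod.natCast_val, ZMod.cast_id]),
        mul_assoc, ← mul_assoc (s ^ (i.val : ℤ)), key, ← mul_assoc, ← mul_assoc, htt, one_mul,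
        ← zpow_add]
      ring_nf
  refine ⟨MonoidHom.mk' f hmul, ?_, ?_⟩
  · show s ^ (((1 : ZMod n)).val : ℤ) = s
    rw [zc 1 1 (by push_cast; simp), zpow_one]
  · show t * s ^ (((0 : ZMod n)).val : ℤ) = t
    simp [ZMod.val_zero]


namespace DHelper

variable (A : Type) [CommRing A] (n : ℕ) (F a : A)

lemma rel1 : uElt A n F a * vElt A n F a = algebraMap A (DihedralCoverRing A n F a) F := by
  have h : (Ideal.Quotient.mk (dihedralIdeal A n F a))
      (MvPolynomial.X 0 * MvPolynomial.X 1 - MvPolynomial.C F) = 0 :=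
    Ideal.Quotient.eq_zero_iff_mem.mpr (Ideal.subset_span (Or.inl rfl))
  rw [map_sub, map_mul, sub_eq_zero] at h
  rw [← MvPolynomial.algebraMap_eq, Ideal.Quotient.mk_algebraMap] at h; exact h

lemma rel2 : uElt A n F a ^ n + vElt A n F a ^ n
    = algebraMap A (DihedralCoverRing A n F a) (2 * a) := by
  have h : (Ideal.Quotient.mk (dihedralIdeal A n F a))
      (MvPolynomial.X 0 ^ n + MvPolynomial.X 1 ^ n - MvPolynomial.C (2 * a)) = 0 :=
    Ideal.Quotient.eq_zero_iff_mem.mpr (Ideal.subset_span (Or.inr rfl))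
  rw [map_sub, map_add, map_pow, map_pow, sub_eq_zero] at h
  rw [← MvPolynomial.algebraMap_eq, Ideal.Quotient.mk_algebraMap] at h; exact h

/-- Extensionality: `A`-algebra homs out of `B` are determined by values on `u`, `v`. -/
lemma hom_ext {C : Type} [CommRing C] [Algebra A C]
    {f g : DihedralCoverRing A n F a →ₐ[A] C}
    (h0 : f (uElt A n F a) = g (uElt A n F a))
    (h1 : f (vElt A n F a) = g (vElt A n F a)) : f = g := by
  have key : f.comp (Ideal.Quotient.mkₐ A (dihedralIdeal A n F a))
      = g.comp (Ideal.Quotient.mkₐ A (dihedralIdeal A n F a)) := by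
    apply MvPolynomial.algHom_ext
    intro i
    fin_cases i
    · simpa [uElt, Ideal.Quotient.mkₐ_eq_mk] using h0
    · simpa [vElt, Ideal.Quotient.mkₐ_eq_mk] using h1
  ext x
  obtain ⟨y, rfl⟩ := Ideal.Quotient.mkₐ_surjective A (dihedralIdeal A n F a) x
  exact DFunLike.congr_fun key y

lemma equiv_ext {f g : DihedralCoverRing A n F a ≃ₐ[A] DihedralCoverRing A n F a}
    (h0 : f (uElt A n F a) = g (uElt A n F a))
    (h1 : f (vElt A n F a) = g (vElt A n F a)) : f = g := by
  have := hom_ext A n F a (f := f.toAlgHom) (g := g.toAlgHom) h0 h1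
  exact AlgEquiv.coe_algHom_injective this

/-- Construct an `A`-algebra endomorphism of `B` from a suitable pair of elements. -/
def mkHom (x y : DihedralCoverRing A n F a)
    (h1 : x * y = algebraMap A _ F)
    (h2 : x ^ n + y ^ n = algebraMap A _ (2 * a)) :
    DihedralCoverRing A n F a →ₐ[A] DihedralCoverRing A n F a :=
  Ideal.Quotient.liftₐ (dihedralIdeal A n F a) (MvPolynomial.aeval ![x, y]) (by
    intro p hp
    have : p ∈ RingHom.ker (MvPolynomial.aeval ![x, y] : _ →ₐ[A] _).toRingHom := by
      refine Ideal.span_le.mpr ?_ hp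
      rintro q (rfl | rfl) <;>
        simp only [SetLike.mem_coe, RingHom.mem_ker, AlgHom.toRingHom_eq_coe,
          RingHom.coe_coe, map_sub, map_add, map_mul, map_pow,
          MvPolynomial.aeval_X, MvPolynomial.aeval_C, Matrix.cons_val_zero, Matrix.cons_val_one,
          Matrix.head_cons]
      · rw [h1, sub_self]
      · rw [h2, ← map_mul, sub_self]
    exact this)

@[simp] lemma mkHom_u (x y : DihedralCoverRing A n F a) (h1 h2) :
    mkHom A n F a x y h1 h2 (uElt A n F a) = x := by
  change MvPolynomial.aeval ![x, y] (MvPolynomial.X 0) = x; simp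

@[simp] lemma mkHom_v (x y : DihedralCoverRing A n F a) (h1 h2) :
    mkHom A n F a x y h1 h2 (vElt A n F a) = y := by
  change MvPolynomial.aeval ![x, y] (MvPolynomial.X 1) = y; simp

end DHelper


theorem dihedralCoverRing_dihedral_action
    (A : Type) [CommRing A] (n : ℕ) (hn : 1 ≤ n) (F a : A)
    (ζ : Aˣ) (hζ : ζ ^ n = 1) :
    ∃ σ τ : DihedralCoverRing A n F a ≃ₐ[A] DihedralCoverRing A n F a,
      σ (uElt A n F a) = (ζ : A) • uElt A n F a ∧
      σ (vElt A n F a) = ((ζ⁻¹ : Aˣ) : A) • vElt A n F a ∧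
      τ (uElt A n F a) = vElt A n F a ∧
      τ (vElt A n F a) = uElt A n F a ∧
      (∀ σ' : DihedralCoverRing A n F a ≃ₐ[A] DihedralCoverRing A n F a,
        σ' (uElt A n F a) = (ζ : A) • uElt A n F a →
        σ' (vElt A n F a) = ((ζ⁻¹ : Aˣ) : A) • vElt A n F a → σ' = σ) ∧
      (∀ τ' : DihedralCoverRing A n F a ≃ₐ[A] DihedralCoverRing A n F a,
        τ' (uElt A n F a) = vElt A n F a →
        τ' (vElt A n F a) = uElt A n F a → τ' = τ) ∧
      σ ^ n = 1 ∧ τ ^ 2 = 1 ∧ (σ * τ) ^ 2 = 1 ∧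
      ∃ ρ : DihedralGroup n →*
          (DihedralCoverRing A n F a ≃ₐ[A] DihedralCoverRing A n F a),
        ρ (DihedralGroup.r 1) = σ ∧ ρ (DihedralGroup.sr 0) = τ := by
  have : NeZero n := ⟨by omega⟩
  set B := DihedralCoverRing A n F a
  set u := uElt A n F a
  set v := vElt A n F a
  have hr1 : u * v = algebraMap A B F := DHelper.rel1 A n F a
  have hr2 : u ^ n + v ^ n = algebraMap A B (2 * a) := DHelper.rel2 A n F a
  have hζA : (ζ : A) ^ n = 1 := by
    rw [← Units.val_pow_eq_pow_val, hζ, Units.val_one]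
  have hζA' : ((ζ⁻¹ : Aˣ) : A) ^ n = 1 := by
    rw [← Units.val_pow_eq_pow_val, inv_pow, hζ, inv_one, Units.val_one]
  have hmix : (ζ : A) * ((ζ⁻¹ : Aˣ) : A) = 1 := by
    rw [← Units.val_mul, mul_inv_cancel, Units.val_one]
  have hmix' : ((ζ⁻¹ : Aˣ) : A) * (ζ : A) = 1 := by
    rw [← Units.val_mul, inv_mul_cancel, Units.val_one]
  -- relations for the twisted generators
  have h1σ : ((ζ : A) • u) * (((ζ⁻¹ : Aˣ) : A) • v) = algebraMap A B F := by
    rw [smul_mul_smul_comm, hmix, one_smul, hr1]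
  have h2σ : ((ζ : A) • u) ^ n + (((ζ⁻¹ : Aˣ) : A) • v) ^ n = algebraMap A B (2 * a) := by
    rw [smul_pow, smul_pow, hζA, hζA', one_smul, one_smul, hr2]
  have h1σ' : (((ζ⁻¹ : Aˣ) : A) • u) * ((ζ : A) • v) = algebraMap A B F := by
    rw [smul_mul_smul_comm, hmix', one_smul, hr1]
  have h2σ' : (((ζ⁻¹ : Aˣ) : A) • u) ^ n + ((ζ : A) • v) ^ n = algebraMap A B (2 * a) := by
    rw [smul_pow, smul_pow, hζA, hζA', one_smul, one_smul, hr2]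
  have h1τ : v * u = algebraMap A B F := by rw [mul_comm, hr1]
  have h2τ : v ^ n + u ^ n = algebraMap A B (2 * a) := by rw [add_comm, hr2]
  let σ0 := DHelper.mkHom A n F a ((ζ : A) • u) (((ζ⁻¹ : Aˣ) : A) • v) h1σ h2σ
  let σ0' := DHelper.mkHom A n F a (((ζ⁻¹ : Aˣ) : A) • u) ((ζ : A) • v) h1σ' h2σ'
  let τ0 := DHelper.mkHom A n F a v u h1τ h2τ
  have σ0u : σ0 u = (ζ : A) • u := DHelper.mkHom_u A n F a _ _ _ _
  have σ0v : σ0 v = ((ζ⁻¹ : Aˣ) : A) • v := DHelper.mkHom_v A n F a _ _ _ _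
  have σ0u' : σ0' u = ((ζ⁻¹ : Aˣ) : A) • u := DHelper.mkHom_u A n F a _ _ _ _
  have σ0v' : σ0' v = (ζ : A) • v := DHelper.mkHom_v A n F a _ _ _ _
  have τ0u : τ0 u = v := DHelper.mkHom_u A n F a _ _ _ _
  have τ0v : τ0 v = u := DHelper.mkHom_v A n F a _ _ _ _
  let σ : B ≃ₐ[A] B := AlgEquiv.ofAlgHom σ0 σ0'
    (DHelper.hom_ext A n F a
      (by change σ0 (σ0' u) = u; simp [AlgHom.coe_comp, Function.comp, σ0u', σ0u, map_smul, smul_smul, hmix])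
      (by change σ0 (σ0' v) = v; simp [AlgHom.coe_comp, Function.comp, σ0v', σ0v, map_smul, smul_smul, hmix']))
    (DHelper.hom_ext A n F a
      (by change σ0' (σ0 u) = u; simp [AlgHom.coe_comp, Function.comp, σ0u', σ0u, map_smul, smul_smul, hmix'])
      (by change σ0' (σ0 v) = v; simp [AlgHom.coe_comp, Function.comp, σ0v', σ0v, map_smul, smul_smul, hmix]))
  let τ : B ≃ₐ[A] B := AlgEquiv.ofAlgHom τ0 τ0
    (DHelper.hom_ext A n F a
      (by change τ0 (τ0 u) = u; simp [AlgHom.coe_comp, Function.comp, τ0u, τ0v])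
      (by change τ0 (τ0 v) = v; simp [AlgHom.coe_comp, Function.comp, τ0u, τ0v]))
    (DHelper.hom_ext A n F a
      (by change τ0 (τ0 u) = u; simp [AlgHom.coe_comp, Function.comp, τ0u, τ0v])
      (by change τ0 (τ0 v) = v; simp [AlgHom.coe_comp, Function.comp, τ0u, τ0v]))
  have σu : σ u = (ζ : A) • u := σ0u
  have σv : σ v = ((ζ⁻¹ : Aˣ) : A) • v := σ0v
  have τu : τ u = v := τ0u
  have τv : τ v = u := τ0v
  -- powers of σ
  have σpowu : ∀ k : ℕ, (σ ^ k) u = ((ζ ^ k : Aˣ) : A) • u := by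
    intro k
    induction k with
    | zero => simp
    | succ k ih =>
      rw [pow_succ, AlgEquiv.mul_apply, σu, map_smul, ih, smul_smul, ← Units.val_mul,
        pow_succ']
  have σpowv : ∀ k : ℕ, (σ ^ k) v = (((ζ⁻¹ : Aˣ) ^ k : Aˣ) : A) • v := by
    intro k
    induction k with
    | zero => simp
    | succ k ih =>
      rw [pow_succ, AlgEquiv.mul_apply, σv, map_smul, ih, smul_smul, ← Units.val_mul,
        pow_succ']
  have hσn : σ ^ n = 1 := by
    refine DHelper.equiv_ext A n F a ?_ ?_
    · rw [σpowu n, hζ, Units.val_one, one_smul, AlgEquiv.one_apply]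
    · rw [σpowv n, inv_pow, hζ, inv_one, Units.val_one, one_smul, AlgEquiv.one_apply]
  have hτ2 : τ ^ 2 = 1 := by
    refine DHelper.equiv_ext A n F a ?_ ?_
    · rw [sq, AlgEquiv.mul_apply, τu, τv, AlgEquiv.one_apply]
    · rw [sq, AlgEquiv.mul_apply, τv, τu, AlgEquiv.one_apply]
  have hστ2 : (σ * τ) ^ 2 = 1 := by
    refine DHelper.equiv_ext A n F a ?_ ?_
    · rw [sq, AlgEquiv.mul_apply, AlgEquiv.mul_apply, AlgEquiv.mul_apply, τu, σv, map_smul,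
        τv, map_smul, σu, smul_smul, hmix', one_smul, AlgEquiv.one_apply]
    · rw [sq, AlgEquiv.mul_apply, AlgEquiv.mul_apply, AlgEquiv.mul_apply, τv, σu, map_smul,
        τu, map_smul, σv, smul_smul, hmix, one_smul, AlgEquiv.one_apply]
  obtain ⟨ρ, hρ1, hρ2⟩ := dihedral_lift n σ τ hσn hτ2 hστ2
  exact ⟨σ, τ, σu, σv, τu, τv,
    fun σ' h0 h1 => DHelper.equiv_ext A n F a (h0.trans σu.symm) (h1.trans σv.symm),
    fun τ' h0 h1 => DHelper.equiv_ext A n F a (h0.trans τu.symm) (h1.trans τv.symm),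
    hσn, hτ2, hστ2, ρ, hρ1, hρ2⟩
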